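/- arXiv:2306.13403 — 2 statements merged into one kernel-verified Lean document; each statement's English description precedes it below -/
import Mathlib

section
/- There is δ₀ > 0 such that the following is true. Suppose that G is an abelian group, X is a random variable taking values in a finite subset of G, and x₀ ∈ G is a value such that P(X = x₀) ≥ 1 − δ₀. Then H(X) ≤ 2 d_ent(X, X). -/
open Finset

noncomputable section

/-- `IsPMF p`: the finitely supported function `p` is a probability mass function,
modelling the distribution of a random variable taking values in a finite subset. -/
def IsPMF {G : Type*} (p : G →₀ ℝ) : Prop :=
  (∀ x, 0 ≤ p x) ∧ ∑ x ∈ p.support, p x = 1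

/-- Shannon entropy `H(X)` of a random variable with distribution `p`. -/
def ent {G : Type*} (p : G →₀ ℝ) : ℝ :=
  ∑ x ∈ p.support, Real.negMulLog (p x)

/-- The joint distribution of a pair of independent random variables with
distributions `p` and `q`. -/
def prodPMF {G H : Type*} (p : G →₀ ℝ) (q : H →₀ ℝ) : (G × H) →₀ ℝ :=
  Finsupp.onFinset (p.support ×ˢ q.support) (fun z => p z.1 * q z.2)
    (fun _z hz => Finset.mem_product.2
      ⟨Finsupp.mem_support_iff.2 (left_ne_zero_of_mul hz),
       Finsupp.mem_support_iff.2 (right_ne_zero_of_mul hz)⟩)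

/-- The distribution of `X - Y`, where `X, Y` are independent with distributions `p, q`. -/
def subDist {G : Type*} [AddCommGroup G] (p q : G →₀ ℝ) : G →₀ ℝ :=
  Finsupp.mapDomain (fun z : G × G => z.1 - z.2) (prodPMF p q)

/-- The distribution of `X + Y`, where `X, Y` are independent with distributions `p, q`. -/
def sumDist {G : Type*} [AddCommGroup G] (p q : G →₀ ℝ) : G →₀ ℝ :=
  Finsupp.mapDomain (fun z : G × G => z.1 + z.2) (prodPMF p q)

/-- The entropic Ruzsa distance `d_ent(X, Y) = H(X' - Y') - H(X)/2 - H(Y)/2`,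
where `X', Y'` are independent copies of `X ~ p`, `Y ~ q`. -/
def dEnt {G : Type*} [AddCommGroup G] (p q : G →₀ ℝ) : ℝ :=
  ent (subDist p q) - ent p / 2 - ent q / 2

/-- The entropic doubling constant `σ_ent[X] = exp(H(X₁ + X₂) - H(X))`
for independent copies `X₁, X₂` of `X ~ p`. -/
def sigmaEnt {G : Type*} [AddCommGroup G] (p : G →₀ ℝ) : ℝ :=
  Real.exp (ent (sumDist p p) - ent p)

/-- First marginal of a joint distribution on `G × H`. -/
def fstMarg {G H : Type*} (w : (G × H) →₀ ℝ) : G →₀ ℝ :=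
  Finsupp.mapDomain Prod.fst w

/-- Second marginal of a joint distribution on `G × H`. -/
def sndMarg {G H : Type*} (w : (G × H) →₀ ℝ) : H →₀ ℝ :=
  Finsupp.mapDomain Prod.snd w

/-- The maximal entropic Ruzsa distance `d*_ent(X, Y)`: the supremum of
`H(X' - Y') - H(X)/2 - H(Y)/2` over all couplings `(X', Y')` of `X ~ p` and `Y ~ q`. -/
def dEntStar {G : Type*} [AddCommGroup G] (p q : G →₀ ℝ) : ℝ :=
  sSup { d : ℝ | ∃ w : (G × G) →₀ ℝ, IsPMF w ∧ fstMarg w = p ∧ sndMarg w = q ∧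
    d = ent (Finsupp.mapDomain (fun z : G × G => z.1 - z.2) w) - ent p / 2 - ent q / 2 }

/-- The uniform distribution on a finite set `A`. -/
def unif {G : Type*} [DecidableEq G] (A : Finset G) : G →₀ ℝ :=
  Finsupp.onFinset A (fun x => if x ∈ A then ((A.card : ℝ))⁻¹ else 0)
    (fun x hx => by by_contra h; exact hx (if_neg h))

/-- The distribution of `X` conditioned on the event `π(X) = y`, where `X ~ p`. -/
def condFiber {G H : Type*} [DecidableEq H] (π : G → H) (y : H) (p : G →₀ ℝ) : G →₀ ℝ :=
  Finsupp.onFinset p.support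
    (fun x => if π x = y then p x / (Finsupp.mapDomain π p) y else 0)
    (fun x hx => Finsupp.mem_support_iff.2 (fun h0 => hx (by simp [h0])))

/-- The entropy `h(p)` of the Bernoulli distribution with parameter `p`. -/
def binEnt (p : ℝ) : ℝ := Real.negMulLog p + Real.negMulLog (1 - p)

/-- Skew-dimension bound: `skewDimLE A r` means the skew-dimension of `A ⊆ ℤ^D`
is at most `r`. -/
def skewDimLE {D : ℕ} : Finset (Fin D → ℤ) → ℕ → Prop
  | A, 0 => A.card ≤ 1
  | A, r + 1 => A.card ≤ 1 ∨ ∃ i : Fin D, ∀ n : ℤ,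
      skewDimLE (A.filter fun v => v i = n) r

/-- The (affine) dimension of a finite subset `A ⊆ ℤ^D`: the dimension of the
real span of `A - A`. -/
def dimAff {D : ℕ} (A : Finset (Fin D → ℤ)) : ℕ :=
  Module.finrank ℝ (Submodule.span ℝ
    { x : Fin D → ℝ | ∃ a ∈ A, ∃ b ∈ A, x = fun i => ((a i : ℝ) - (b i : ℝ)) })


lemma negMulLog_mono {s t : ℝ} (hs : 0 ≤ s) (hst : s ≤ t) (ht : t ≤ Real.exp (-1)) :
    Real.negMulLog s ≤ Real.negMulLog t := by
  have hmono : MonotoneOn Real.negMulLog (Set.Icc 0 (Real.exp (-1))) := by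
    apply monotoneOn_of_deriv_nonneg (convex_Icc _ _)
      Real.continuous_negMulLog.continuousOn
    · intro x hx
      rw [interior_Icc] at hx
      exact (Real.differentiableAt_negMulLog hx.1.ne').differentiableWithinAt
    · intro x hx
      rw [interior_Icc] at hx
      rw [Real.deriv_negMulLog hx.1.ne']
      have h1 : Real.log x ≤ -1 := by
        calc Real.log x ≤ Real.log (Real.exp (-1)) := Real.log_le_log hx.1 hx.2.le
        _ = -1 := Real.log_exp _
      linarith
  exact hmono ⟨hs, hst.trans ht⟩ ⟨hs.trans hst, ht⟩ hst

lemma negMulLog_add_le {a b : ℝ} (ha : 0 ≤ a) (hb : 0 ≤ b) :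
    Real.negMulLog a + Real.negMulLog b ≤ Real.negMulLog (a + b) + (a + b) := by
  rcases eq_or_lt_of_le ha with h | ha
  · simp [← h]
    linarith
  rcases eq_or_lt_of_le hb with h | hb
  · simp [← h]
    linarith
  have hab : 0 < a + b := by linarith
  have h1 : Real.log (a + b) - Real.log a ≤ b / a := by
    rw [← Real.log_div hab.ne' ha.ne']
    have h := Real.log_le_sub_one_of_pos (div_pos hab ha)
    have : (a + b) / a - 1 = b / a := by field_simp; ring
    linarith
  have h2 : Real.log (a + b) - Real.log b ≤ a / b := by
    rw [← Real.log_div hab.ne' hb.ne']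
    have h := Real.log_le_sub_one_of_pos (div_pos hab hb)
    have : (a + b) / b - 1 = a / b := by field_simp; ring
    linarith
  have h1' : a * (Real.log (a + b) - Real.log a) ≤ b := by
    calc a * (Real.log (a + b) - Real.log a) ≤ a * (b / a) :=
          mul_le_mul_of_nonneg_left h1 ha.le
      _ = b := by field_simp
  have h2' : b * (Real.log (a + b) - Real.log b) ≤ a := by
    calc b * (Real.log (a + b) - Real.log b) ≤ b * (a / b) :=
          mul_le_mul_of_nonneg_left h2 hb.le
      _ = a := by field_simp
  simp only [Real.negMulLog]
  nlinarith

lemma mapDomain_apply_sum {α β : Type*} [DecidableEq β] (f : α → β) (w : α →₀ ℝ) (x : β) :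
    Finsupp.mapDomain f w x = ∑ z ∈ w.support, if f z = x then w z else 0 := by
  simp [Finsupp.mapDomain, Finsupp.sum_apply, Finsupp.sum, Finsupp.single_apply]

lemma finsupp_sum_mapDomain {α β : Type*} (f : α → β) (w : α →₀ ℝ) :
    ∑ x ∈ (Finsupp.mapDomain f w).support, Finsupp.mapDomain f w x
      = ∑ z ∈ w.support, w z := by
  have := Finsupp.sum_mapDomain_index (f := f) (s := w) (h := fun _ v => v)
    (fun _ => rfl) (fun _ _ _ => rfl)
  simpa [Finsupp.sum] using this

universe u

set_option maxHeartbeats 1000000 in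
/-- There is `δ₀ > 0` such that: if `X ~ p` is a random variable taking
values in a finite subset of an abelian group `G` and `x₀ ∈ G` satisfies
`P(X = x₀) ≥ 1 - δ₀`, then `H(X) ≤ 2 d_ent(X, X)`. -/
theorem statement13 :
    ∃ δ₀ : ℝ, 0 < δ₀ ∧
      ∀ (G : Type u) [AddCommGroup G] (p : G →₀ ℝ), IsPMF p →
        ∀ x₀ : G, 1 - δ₀ ≤ p x₀ → ent p ≤ 2 * dEnt p p := by
  classical
  refine ⟨Real.exp (-26), Real.exp_pos _, ?_⟩
  intro G _ p hp x₀ hx₀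
  obtain ⟨hpn, hps⟩ := hp
  set δ : ℝ := 1 - p x₀ with hδdef
  -- numerics
  have hexp27 : Real.exp (-26 : ℝ) ≤ 1 / 27 := by
    have h1 : (27 : ℝ) ≤ Real.exp 26 := by
      have := Real.add_one_le_exp (26 : ℝ); linarith
    rw [Real.exp_neg]
    have h2 := inv_anti₀ (by norm_num : (0:ℝ) < 27) h1
    rw [show ((27:ℝ))⁻¹ = 1/27 by norm_num] at h2
    exact h2
  have hp1 : ∀ y, p y ≤ 1 := by
    intro y
    by_cases hy : y ∈ p.support
    · rw [← hps]; exact Finset.single_le_sum (fun i _ => hpn i) hy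
    · rw [Finsupp.notMem_support_iff.1 hy]; norm_num
  have hδ0 : 0 ≤ δ := by have := hp1 x₀; simp [hδdef]; linarith
  have hδδ₀ : δ ≤ Real.exp (-26) := by simp [hδdef]; linarith
  have hδsmall : δ ≤ 1 / 27 := hδδ₀.trans hexp27
  have hpx₀eq : p x₀ = 1 - δ := by rw [hδdef]; ring
  have hpx₀pos : 0 < p x₀ := by rw [hpx₀eq]; linarith
  have hx₀supp : x₀ ∈ p.support := Finsupp.mem_support_iff.2 hpx₀pos.ne'
  set U := p.support.erase x₀ with hUdef
  have hUsum : ∑ y ∈ U, p y = δ := by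
    have h := Finset.add_sum_erase p.support p hx₀supp
    rw [hps] at h
    rw [hδdef]; linarith
  have hpyδ : ∀ y ∈ U, p y ≤ δ := by
    intro y hy
    rw [← hUsum]; exact Finset.single_le_sum (fun i _ => hpn i) hy
  set e₀ := Real.negMulLog (p x₀) with he₀def
  set S := ∑ y ∈ U, Real.negMulLog (p y) with hSdef
  have hentsplit : ent p = e₀ + S := by
    rw [ent, he₀def, hSdef, hUdef]
    exact (Finset.add_sum_erase _ _ hx₀supp).symm
  have hS0 : 0 ≤ S := by
    apply Finset.sum_nonneg
    intro y _; exact Real.negMulLog_nonneg (hpn y) (hp1 y)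
  have hSδ : Real.negMulLog δ ≤ S := by
    rcases eq_or_lt_of_le hδ0 with h | hδpos
    · rw [← h]; simpa using hS0
    · have hterm : ∀ y ∈ U, -(p y) * Real.log δ ≤ Real.negMulLog (p y) := by
        intro y hy
        have hpy : 0 < p y := by
          have := (Finset.mem_erase.1 hy).2
          exact lt_of_le_of_ne (hpn y) (Ne.symm (Finsupp.mem_support_iff.1 this))
        have hl : Real.log (p y) ≤ Real.log δ := Real.log_le_log hpy (hpyδ y hy)
        simp only [Real.negMulLog]
        nlinarith
      have hsum : ∑ y ∈ U, -p y * Real.log δ = -δ * Real.log δ := by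
        have h : ∀ y ∈ U, -p y * Real.log δ = p y * (-Real.log δ) := by
          intro y _; ring
        rw [Finset.sum_congr rfl h, ← Finset.sum_mul, hUsum]; ring
      calc Real.negMulLog δ = ∑ y ∈ U, -p y * Real.log δ := by
            rw [hsum, Real.negMulLog]
        _ ≤ S := Finset.sum_le_sum hterm
  have he₀0 : 0 ≤ e₀ := Real.negMulLog_nonneg (hpn x₀) (hp1 x₀)
  have he₀2δ : e₀ ≤ 2 * δ := by
    have h1 : e₀ ≤ -Real.log (p x₀) := by
      have hl : Real.log (p x₀) ≤ 0 := Real.log_nonpos hpx₀pos.le (hp1 x₀)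
      simp only [he₀def, Real.negMulLog]
      nlinarith [hp1 x₀, hpx₀pos]
    have h2 : -Real.log (p x₀) ≤ 2 * δ := by
      have hmul : 1 ≤ (1 + 2 * δ) * p x₀ := by rw [hpx₀eq]; nlinarith
      have hinv : (p x₀)⁻¹ ≤ 1 + 2 * δ := by
        have h := mul_le_mul_of_nonneg_right hmul (inv_nonneg.2 hpx₀pos.le)
        rw [one_mul, mul_assoc, mul_inv_cancel₀ hpx₀pos.ne', mul_one] at h
        exact h
      have h3 : Real.log ((p x₀)⁻¹) ≤ Real.log (1 + 2 * δ) :=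
        Real.log_le_log (by positivity) hinv
      have h4 : Real.log (1 + 2 * δ) ≤ 2 * δ := by
        have := Real.log_le_sub_one_of_pos (show (0:ℝ) < 1 + 2*δ by linarith)
        linarith
      rw [Real.log_inv] at h3
      linarith
    linarith
  -- the difference distribution
  set r := subDist p p with hrdef
  set P := p.support ×ˢ p.support with hPdef
  have hrP : ∀ x : G, r x = ∑ z ∈ P, if z.1 - z.2 = x then p z.1 * p z.2 else 0 := by
    intro x
    rw [hrdef, subDist, mapDomain_apply_sum]
    apply Finset.sum_subset
    · exact Finsupp.support_onFinset_subset
    · intro z _ hzw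
      have h0 : prodPMF p p z = 0 := Finsupp.notMem_support_iff.1 hzw
      simp [h0]
  have hrP' : ∀ x : G,
      (∑ z ∈ P, if z.1 - z.2 = x then p z.1 * p z.2 else 0)
        = ∑ z ∈ P, if z.1 - z.2 = x then prodPMF p p z else 0 := by
    intro x
    apply Finset.sum_congr rfl
    intro z _
    rw [prodPMF, Finsupp.onFinset_apply]
  have hrnn : ∀ x, 0 ≤ r x := by
    intro x
    rw [hrP]
    apply Finset.sum_nonneg
    intro z _
    split_ifs
    · exact mul_nonneg (hpn _) (hpn _)
    · exact le_rfl
  have hrsum : ∑ x ∈ r.support, r x = 1 := by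
    rw [hrdef, subDist, finsupp_sum_mapDomain]
    have h1 : ∑ z ∈ (prodPMF p p).support, prodPMF p p z = ∑ z ∈ P, prodPMF p p z := by
      apply Finset.sum_subset Finsupp.support_onFinset_subset
      intro z _ hz
      exact Finsupp.notMem_support_iff.1 hz
    rw [h1]
    have h2 : ∑ z ∈ P, prodPMF p p z = ∑ z ∈ P, p z.1 * p z.2 := by
      apply Finset.sum_congr rfl
      intro z _
      rw [prodPMF, Finsupp.onFinset_apply]
    rw [h2, hPdef, Finset.sum_product]
    calc ∑ a ∈ p.support, ∑ b ∈ p.support, p a * p b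
        = ∑ a ∈ p.support, p a * 1 := by
          apply Finset.sum_congr rfl
          intro a _
          rw [← Finset.mul_sum, hps]
      _ = 1 := by simp [hps]
  have hr1 : ∀ x, r x ≤ 1 := by
    intro x
    by_cases hx : x ∈ r.support
    · rw [← hrsum]; exact Finset.single_le_sum (fun i _ => hrnn i) hx
    · rw [Finsupp.notMem_support_iff.1 hx]; norm_num
  have hr0 : (1 - δ) ^ 2 ≤ r 0 := by
    rw [hrP]
    have hmem : (x₀, x₀) ∈ P := Finset.mem_product.2 ⟨hx₀supp, hx₀supp⟩
    have h := Finset.single_le_sum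
      (f := fun z : G × G => if z.1 - z.2 = (0:G) then p z.1 * p z.2 else 0)
      (fun z _ => by
        show (0:ℝ) ≤ if z.1 - z.2 = (0:G) then p z.1 * p z.2 else 0
        split_ifs
        · exact mul_nonneg (hpn _) (hpn _)
        · exact le_rfl) hmem
    simpa [hpx₀eq, sq] using h
  have hrub : ∀ x : G, x ≠ 0 → r x ≤ 2 * δ := by
    intro x hx
    by_cases hxs : x ∈ r.support
    · have h0s : (0 : G) ∈ r.support := by
        rw [Finsupp.mem_support_iff]
        intro h
        rw [h] at hr0
        nlinarith
      have hsub : ({x, (0:G)} : Finset G) ⊆ r.support := by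
        intro z hz
        rcases Finset.mem_insert.1 hz with h | h
        · rwa [h]
        · rw [Finset.mem_singleton.1 h]; exact h0s
      have hle : r x + r 0 ≤ 1 := by
        rw [← hrsum]
        have h := Finset.sum_le_sum_of_subset_of_nonneg hsub (fun i _ _ => hrnn i)
        rwa [Finset.sum_pair hx] at h
      nlinarith
    · rw [Finsupp.notMem_support_iff.1 hxs]; linarith
  have hrlb : ∀ x : G, x ≠ 0 → (1-δ) * p (x₀+x) + (1-δ) * p (x₀-x) ≤ r x := by
    intro x hx
    rw [hrP]
    set f : G × G → ℝ := fun z => if z.1 - z.2 = x then p z.1 * p z.2 else 0 with hfdef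
    have hfnn : ∀ z, 0 ≤ f z := by
      intro z
      rw [hfdef]
      show (0:ℝ) ≤ if z.1 - z.2 = x then p z.1 * p z.2 else 0
      split_ifs
      · exact mul_nonneg (hpn _) (hpn _)
      · exact le_rfl
    set z₁ : G × G := (x₀ + x, x₀) with hz₁
    set z₂ : G × G := (x₀, x₀ - x) with hz₂
    have hne : z₁ ≠ z₂ := by
      intro h
      apply hx
      have h2 := congrArg Prod.snd h
      simp only [hz₁, hz₂] at h2
      have : x₀ - x₀ = x₀ - (x₀ - x) := by rw [← h2]
      simpa using this.symm
    have hext : ∑ z ∈ P, f z = ∑ z ∈ P ∪ {z₁, z₂}, f z := by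
      apply Finset.sum_subset Finset.subset_union_left
      intro z _ hzP
      rw [hfdef]
      show (if z.1 - z.2 = x then p z.1 * p z.2 else 0) = 0
      have : p z.1 * p z.2 = 0 := by
        by_contra hc
        exact hzP (Finset.mem_product.2
          ⟨Finsupp.mem_support_iff.2 (left_ne_zero_of_mul hc),
           Finsupp.mem_support_iff.2 (right_ne_zero_of_mul hc)⟩)
      simp [this]
    have hpair : f z₁ + f z₂ ≤ ∑ z ∈ P ∪ {z₁, z₂}, f z := by
      have h := Finset.sum_le_sum_of_subset_of_nonneg
        (Finset.subset_union_right (s₁ := P) (s₂ := ({z₁, z₂} : Finset (G × G))))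
        (fun i _ _ => hfnn i)
      rwa [Finset.sum_pair hne] at h
    have hf1 : f z₁ = p (x₀ + x) * (1 - δ) := by
      rw [hfdef, hz₁]
      show (if (x₀ + x) - x₀ = x then p (x₀+x) * p x₀ else 0) = _
      rw [if_pos (by abel), hpx₀eq]
    have hf2 : f z₂ = (1 - δ) * p (x₀ - x) := by
      rw [hfdef, hz₂]
      show (if x₀ - (x₀ - x) = x then p x₀ * p (x₀-x) else 0) = _
      rw [if_pos (by abel), hpx₀eq]
    rw [hext]
    rw [hf1, hf2] at hpair
    linarith
  set V := U.image (fun y => y - x₀) ∪ U.image (fun y => x₀ - y) with hVdef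
  have h0V : (0 : G) ∉ V := by
    rw [hVdef]
    intro h
    rcases Finset.mem_union.1 h with h | h
    · obtain ⟨y, hy, hy0⟩ := Finset.mem_image.1 h
      have : y = x₀ := by
        have := sub_eq_zero.1 hy0; exact this
      exact (Finset.mem_erase.1 hy).1 this
    · obtain ⟨y, hy, hy0⟩ := Finset.mem_image.1 h
      have : x₀ = y := sub_eq_zero.1 hy0
      exact (Finset.mem_erase.1 hy).1 this.symm
  have hentr : ∑ x ∈ V, Real.negMulLog (r x) ≤ ent r := by
    have h1 : ∑ x ∈ V, Real.negMulLog (r x)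
        ≤ ∑ x ∈ V ∪ r.support, Real.negMulLog (r x) :=
      Finset.sum_le_sum_of_subset_of_nonneg Finset.subset_union_left
        (fun i _ _ => Real.negMulLog_nonneg (hrnn i) (hr1 i))
    have h2 : ∑ x ∈ V ∪ r.support, Real.negMulLog (r x)
        = ∑ x ∈ r.support, Real.negMulLog (r x) := by
      symm
      apply Finset.sum_subset Finset.subset_union_right
      intro z _ hz
      rw [Finsupp.notMem_support_iff.1 hz]
      simp
    rw [ent] at *
    calc ∑ x ∈ V, Real.negMulLog (r x) ≤ _ := h1
      _ = _ := h2
  have hE2 : (2:ℝ) ≤ Real.exp 1 := by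
    have := Real.add_one_le_exp (1:ℝ); linarith
  have hδe : 2 * δ ≤ Real.exp (-1) := by
    have h1 : Real.exp (-26 : ℝ) ≤ Real.exp (-2) := Real.exp_le_exp.2 (by norm_num)
    have h2 : 2 * Real.exp (-2 : ℝ) ≤ Real.exp (-1) := by
      rw [show (-2 : ℝ) = -1 + -1 by ring, Real.exp_add]
      have h3 : Real.exp (-1 : ℝ) ≤ 1/2 := by
        rw [Real.exp_neg]
        have := inv_anti₀ (by norm_num : (0:ℝ) < 2) hE2
        rw [show ((2:ℝ))⁻¹ = 1/2 by norm_num] at this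
        exact this
      nlinarith [Real.exp_pos (-1 : ℝ)]
    linarith
  have hkey : ∀ x ∈ V,
      Real.negMulLog ((1-δ) * p (x₀+x)) + Real.negMulLog ((1-δ) * p (x₀-x))
        ≤ Real.negMulLog (r x) + ((1-δ) * p (x₀+x) + (1-δ) * p (x₀-x)) := by
    intro x hxV
    have hx : x ≠ 0 := fun h => h0V (h ▸ hxV)
    have h1δ : (0:ℝ) ≤ 1 - δ := by linarith
    have ha : 0 ≤ (1-δ) * p (x₀+x) := mul_nonneg h1δ (hpn _)
    have hb : 0 ≤ (1-δ) * p (x₀-x) := mul_nonneg h1δ (hpn _)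
    have h1 := negMulLog_add_le ha hb
    have h2 : Real.negMulLog ((1-δ) * p (x₀+x) + (1-δ) * p (x₀-x))
        ≤ Real.negMulLog (r x) :=
      negMulLog_mono (by linarith) (hrlb x hx) ((hrub x hx).trans hδe)
    linarith
  have h1δ : (0:ℝ) ≤ 1 - δ := by linarith
  have hterm_nn : ∀ y : G, 0 ≤ Real.negMulLog ((1-δ) * p y) := by
    intro y
    exact Real.negMulLog_nonneg (mul_nonneg h1δ (hpn y))
      (mul_le_one₀ (by linarith) (hpn y) (hp1 y))
  have hinj1 : ∀ a ∈ V, ∀ b ∈ V, x₀ + a = x₀ + b → a = b :=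
    fun a _ b _ h => add_left_cancel h
  have hinj2 : ∀ a ∈ V, ∀ b ∈ V, x₀ - a = x₀ - b → a = b := by
    intro a _ b _ h
    have h2 : a = x₀ - (x₀ - a) := by abel
    rw [h2, h]; abel
  have hUsub1 : U ⊆ V.image (fun x => x₀ + x) := by
    intro y hy
    refine Finset.mem_image.2 ⟨y - x₀, ?_, by abel⟩
    rw [hVdef]
    exact Finset.mem_union_left _ (Finset.mem_image.2 ⟨y, hy, rfl⟩)
  have hUsub2 : U ⊆ V.image (fun x => x₀ - x) := by
    intro y hy
    refine Finset.mem_image.2 ⟨x₀ - y, ?_, by abel⟩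
    rw [hVdef]
    exact Finset.mem_union_right _ (Finset.mem_image.2 ⟨y, hy, rfl⟩)
  have him1eq : ∑ y ∈ V.image (fun x => x₀ + x), Real.negMulLog ((1-δ) * p y)
      = ∑ x ∈ V, Real.negMulLog ((1-δ) * p (x₀ + x)) := Finset.sum_image hinj1
  have him2eq : ∑ y ∈ V.image (fun x => x₀ - x), Real.negMulLog ((1-δ) * p y)
      = ∑ x ∈ V, Real.negMulLog ((1-δ) * p (x₀ - x)) := Finset.sum_image hinj2
  have himg1 : ∑ y ∈ U, Real.negMulLog ((1-δ) * p y)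
      ≤ ∑ x ∈ V, Real.negMulLog ((1-δ) * p (x₀ + x)) :=
    le_trans (Finset.sum_le_sum_of_subset_of_nonneg hUsub1 (fun i _ _ => hterm_nn i))
      (le_of_eq him1eq)
  have himg2 : ∑ y ∈ U, Real.negMulLog ((1-δ) * p y)
      ≤ ∑ x ∈ V, Real.negMulLog ((1-δ) * p (x₀ - x)) :=
    le_trans (Finset.sum_le_sum_of_subset_of_nonneg hUsub2 (fun i _ _ => hterm_nn i))
      (le_of_eq him2eq)
  have hmass : ∀ S : Finset G, x₀ ∉ S → ∑ y ∈ S, p y ≤ δ := by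
    intro T hT
    have h1 : ∑ y ∈ T, p y ≤ ∑ y ∈ T ∪ U, p y :=
      Finset.sum_le_sum_of_subset_of_nonneg Finset.subset_union_left
        (fun i _ _ => hpn i)
    have h2 : ∑ y ∈ T ∪ U, p y = ∑ y ∈ U, p y := by
      symm
      apply Finset.sum_subset Finset.subset_union_right
      intro z hz hzU
      rcases Finset.mem_union.1 hz with h | h
      · have hzx₀ : z ≠ x₀ := fun he => hT (he ▸ h)
        rw [Finsupp.notMem_support_iff.1 ?_]
        rw [hUdef] at hzU
        intro hzs
        exact hzU (Finset.mem_erase.2 ⟨hzx₀, hzs⟩)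
      · exact absurd h hzU
    rw [← hUsum]
    calc ∑ y ∈ T, p y ≤ _ := h1
      _ = _ := h2
  have hm1eq : ∑ y ∈ V.image (fun x => x₀ + x), p y = ∑ x ∈ V, p (x₀ + x) :=
    Finset.sum_image hinj1
  have hm2eq : ∑ y ∈ V.image (fun x => x₀ - x), p y = ∑ x ∈ V, p (x₀ - x) :=
    Finset.sum_image hinj2
  have hmass1 : ∑ x ∈ V, p (x₀ + x) ≤ δ := by
    rw [← hm1eq]
    apply hmass
    intro h
    obtain ⟨x, hxV, hxe⟩ := Finset.mem_image.1 h
    have : x = 0 := by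
      have : x₀ + x = x₀ + 0 := by rw [hxe]; abel
      exact add_left_cancel this
    exact h0V (this ▸ hxV)
  have hmass2 : ∑ x ∈ V, p (x₀ - x) ≤ δ := by
    rw [← hm2eq]
    apply hmass
    intro h
    obtain ⟨x, hxV, hxe⟩ := Finset.mem_image.1 h
    have hx0 : x = 0 := by
      have h2 : x = x₀ - (x₀ - x) := by abel
      rw [h2, hxe]; abel
    exact h0V (hx0 ▸ hxV)
  -- assemble
  have hAU : (1-δ) * S ≤ ∑ y ∈ U, Real.negMulLog ((1-δ) * p y) := by
    have hnm1δ : 0 ≤ Real.negMulLog (1-δ) :=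
      Real.negMulLog_nonneg h1δ (by linarith)
    have hterm : ∀ y ∈ U, (1-δ) * Real.negMulLog (p y)
        ≤ Real.negMulLog ((1-δ) * p y) := by
      intro y _
      rw [Real.negMulLog_mul]
      linarith [mul_nonneg (hpn y) hnm1δ]
    calc (1-δ) * S = ∑ y ∈ U, (1-δ) * Real.negMulLog (p y) := by
          rw [hSdef, Finset.mul_sum]
      _ ≤ _ := Finset.sum_le_sum hterm
  have hsk := Finset.sum_le_sum hkey
  rw [Finset.sum_add_distrib, Finset.sum_add_distrib, Finset.sum_add_distrib] at hsk
  have hVa : ∑ x ∈ V, (1-δ) * p (x₀+x) ≤ δ := by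
    rw [← Finset.mul_sum]
    nlinarith [hmass1, Finset.sum_nonneg (fun i (_ : i ∈ V) => hpn (x₀+i))]
  have hVb : ∑ x ∈ V, (1-δ) * p (x₀-x) ≤ δ := by
    rw [← Finset.mul_sum]
    nlinarith [hmass2, Finset.sum_nonneg (fun i (_ : i ∈ V) => hpn (x₀-i))]
  have hfinal : 2*((1-δ)*S) - 2*δ ≤ ent r := by
    linarith [hentr, hsk, hVa, hVb, hAU, himg1, himg2]
  have hgoal : 3 * ent p ≤ 2 * ent r := by
    rcases eq_or_lt_of_le hδ0 with h | hδpos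
    · have he₀z : e₀ = 0 := by rw [he₀def, hpx₀eq, ← h]; simp
      rw [hentsplit, he₀z]
      have h2 := hfinal
      rw [← h] at h2
      simp only [sub_zero, mul_zero, one_mul] at h2
      linarith [hS0]
    · have hlog : Real.log δ ≤ -26 := by
        calc Real.log δ ≤ Real.log (Real.exp (-26)) := Real.log_le_log hδpos hδδ₀
          _ = -26 := Real.log_exp _
      have h26 : 26 * δ ≤ S := by
        have hnm : Real.negMulLog δ = -δ * Real.log δ := rfl
        nlinarith [hSδ]
      have hp4 : (0:ℝ) ≤ 1 - 4*δ := by linarith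
      have hprod := mul_le_mul_of_nonneg_right h26 hp4
      rw [hentsplit]
      nlinarith [hfinal, hprod, he₀2δ, he₀0,
        mul_le_mul_of_nonneg_left hδsmall hδ0]
  rw [dEnt, ← hrdef]
  linarith [hgoal]

end
end

section
/- Let D ≥ 0 and let X, Y be random variables taking values in finite subsets of Z^D. Denote by φ : Z^D → F₂^D the natural reduction-mod-2 homomorphism. Then H(φ(X)) ≤ 10 d_ent(X, Y) and H(φ(Y)) ≤ 10 d_ent(X, Y). -/
open Finset

noncomputable section

set_option maxHeartbeats 1000000

namespace S17
open Finsupp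

variable {α β γ δ : Type*}

/-- Nonnegativity of a finitely supported function. -/
def NN (v : α →₀ ℝ) : Prop := ∀ x, 0 ≤ v x

lemma mapDomain_apply_eq (f : α → β) (v : α →₀ ℝ) (b : β) [DecidableEq β] :
    Finsupp.mapDomain f v b = ∑ z ∈ v.support.filter (fun z => f z = b), v z := by
  classical
  rw [Finsupp.mapDomain, Finsupp.sum_apply, Finsupp.sum, Finset.sum_filter]
  exact Finset.sum_congr rfl fun z _ => by rw [Finsupp.single_apply]

lemma NN.mapDomain (f : α → β) {v : α →₀ ℝ} (hv : NN v) : NN (Finsupp.mapDomain f v) := by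
  classical
  intro b; rw [mapDomain_apply_eq]; exact Finset.sum_nonneg fun z _ => hv z

lemma total_mapDomain (f : α → β) (v : α →₀ ℝ) :
    ∑ b ∈ (Finsupp.mapDomain f v).support, Finsupp.mapDomain f v b = ∑ z ∈ v.support, v z := by
  classical
  have := Finsupp.sum_mapDomain_index (f := f) (s := v) (h := fun _ (c : ℝ) => c)
    (fun _ => rfl) (fun _ _ _ => rfl)
  simpa [Finsupp.sum] using this

lemma le_mapDomain (f : α → β) {v : α →₀ ℝ} (hv : NN v) (z : α) :
    v z ≤ Finsupp.mapDomain f v (f z) := by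
  classical
  by_cases h : v z = 0
  · rw [h]; exact hv.mapDomain f _
  · rw [mapDomain_apply_eq]
    exact Finset.single_le_sum (fun i _ => hv i)
      (Finset.mem_filter.2 ⟨Finsupp.mem_support_iff.2 h, rfl⟩)

lemma nn_of_pmf {v : α →₀ ℝ} (h : IsPMF v) : NN v := h.1

lemma pmf_mapDomain {v : α →₀ ℝ} (h : IsPMF v) (f : α → β) :
    IsPMF (Finsupp.mapDomain f v) :=
  ⟨fun b => (nn_of_pmf h).mapDomain f b, by rw [total_mapDomain]; exact h.2⟩

lemma ent_eq_sum (v : α →₀ ℝ) {T : Finset α} (hT : v.support ⊆ T) :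
    ent v = ∑ b ∈ T, Real.negMulLog (v b) := by
  refine Finset.sum_subset hT fun x _ hx => ?_
  rw [Finsupp.notMem_support_iff.1 hx, Real.negMulLog_zero]

lemma negMulLog_add_le {a b : ℝ} (ha : 0 ≤ a) (hb : 0 ≤ b) :
    Real.negMulLog (a + b) ≤ Real.negMulLog a + Real.negMulLog b := by
  rcases eq_or_lt_of_le ha with h | h
  · simp [← h]
  rcases eq_or_lt_of_le hb with h' | h'
  · simp [← h']
  have h1 : Real.log a ≤ Real.log (a + b) := Real.log_le_log h (by linarith)
  have h2 : Real.log b ≤ Real.log (a + b) := Real.log_le_log h' (by linarith)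
  simp only [Real.negMulLog]
  nlinarith

lemma negMulLog_sum_le (s : Finset α) (g : α → ℝ) (hg : ∀ i ∈ s, 0 ≤ g i) :
    Real.negMulLog (∑ i ∈ s, g i) ≤ ∑ i ∈ s, Real.negMulLog (g i) := by
  classical
  induction s using Finset.cons_induction with
  | empty => simp
  | cons a s ha ih =>
    rw [Finset.sum_cons, Finset.sum_cons]
    calc Real.negMulLog (g a + ∑ i ∈ s, g i)
        ≤ Real.negMulLog (g a) + Real.negMulLog (∑ i ∈ s, g i) :=
          negMulLog_add_le (hg a (Finset.mem_cons_self a s))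
            (Finset.sum_nonneg fun i hi => hg i (Finset.mem_cons_of_mem hi))
      _ ≤ _ := by
          have := ih (fun i hi => hg i (Finset.mem_cons_of_mem hi))
          linarith

lemma ent_mapDomain_le (f : α → β) {v : α →₀ ℝ} (hv : NN v) :
    ent (Finsupp.mapDomain f v) ≤ ent v := by
  classical
  rw [ent_eq_sum (Finsupp.mapDomain f v) (Finsupp.mapDomain_support (f := f) (s := v))]
  calc ∑ b ∈ v.support.image f, Real.negMulLog (Finsupp.mapDomain f v b)
      ≤ ∑ b ∈ v.support.image f, ∑ z ∈ v.support.filter (fun z => f z = b),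
          Real.negMulLog (v z) := by
        refine Finset.sum_le_sum fun b _ => ?_
        rw [mapDomain_apply_eq]
        exact negMulLog_sum_le _ _ (fun i _ => hv i)
    _ = ∑ z ∈ v.support, Real.negMulLog (v z) :=
        Finset.sum_fiberwise_of_maps_to (fun z hz => Finset.mem_image_of_mem f hz) _
    _ = ent v := rfl

lemma ent_mapDomain_eq_sum (f : α → β) {v : α →₀ ℝ} (hv : NN v) :
    ent (Finsupp.mapDomain f v)
      = -∑ z ∈ v.support, v z * Real.log (Finsupp.mapDomain f v (f z)) := by
  classical
  rw [ent_eq_sum (Finsupp.mapDomain f v) (Finsupp.mapDomain_support (f := f) (s := v))]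
  rw [← Finset.sum_fiberwise_of_maps_to (fun z hz => Finset.mem_image_of_mem f hz)
    (fun z => v z * Real.log (Finsupp.mapDomain f v (f z))), ← Finset.sum_neg_distrib]
  refine Finset.sum_congr rfl fun b _ => ?_
  have hcong : ∀ z ∈ v.support.filter (fun z => f z = b),
      v z * Real.log (Finsupp.mapDomain f v (f z)) = v z * Real.log (Finsupp.mapDomain f v b) := by
    intro z hz
    rw [(Finset.mem_filter.1 hz).2]
  rw [Finset.sum_congr rfl hcong, ← Finset.sum_mul, ← mapDomain_apply_eq f v b]
  rw [Real.negMulLog_def]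
  ring

lemma sum_row_le {A C : Type*} (V : (A × C) →₀ ℝ) (hV : NN V) (s : Finset A) (c : C) :
    ∑ a ∈ s, V (a, c) ≤ Finsupp.mapDomain (fun z : A × C => z.2) V c := by
  classical
  rw [mapDomain_apply_eq]
  rw [← Finset.sum_filter_ne_zero (s := s) (f := fun a => V (a, c))]
  rw [← Finset.sum_image (g := fun a : A => (a, c)) (f := fun z => V z)
    (fun x _ y _ h => congrArg Prod.fst h)]
  refine Finset.sum_le_sum_of_subset_of_nonneg ?_ (fun z _ _ => hV z)
  intro z hz
  obtain ⟨a, ha, rfl⟩ := Finset.mem_image.1 hz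
  have := (Finset.mem_filter.1 ha).2
  exact Finset.mem_filter.2 ⟨Finsupp.mem_support_iff.2 this, rfl⟩

/-- Submodularity of Shannon entropy (conditioning on a function of the second
coordinate): `H[(A,F(B))] + H[B] ≥ H[(A,B)] + H[F(B)]`. -/
lemma submod {A B C : Type*} (W : (A × B) →₀ ℝ) (hW : NN W) (F : B → C) :
    ent W + ent (Finsupp.mapDomain (fun z : A × B => F z.2) W)
      ≤ ent (Finsupp.mapDomain (fun z : A × B => (z.1, F z.2)) W)
        + ent (Finsupp.mapDomain (fun z : A × B => z.2) W) := by
  classical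
  set W' := Finsupp.mapDomain (fun z : A × B => (z.1, F z.2)) W with hW'def
  set m := Finsupp.mapDomain (fun z : A × B => z.2) W with hmdef
  set m' := Finsupp.mapDomain (fun z : A × B => F z.2) W with hm'def
  have hcomp : m' = Finsupp.mapDomain F m := by
    rw [hm'def, hmdef, ← Finsupp.mapDomain_comp]; rfl
  have hcomp2 : m' = Finsupp.mapDomain (fun z : A × C => z.2) W' := by
    rw [hm'def, hW'def, ← Finsupp.mapDomain_comp]; rfl
  have eW : ent W = -∑ z ∈ W.support, W z * Real.log (W z) := by
    rw [ent, ← Finset.sum_neg_distrib]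
    exact Finset.sum_congr rfl fun z _ => by rw [Real.negMulLog_def]; ring
  have eW' : ent W' = -∑ z ∈ W.support, W z * Real.log (W' (z.1, F z.2)) :=
    ent_mapDomain_eq_sum _ hW
  have em : ent m = -∑ z ∈ W.support, W z * Real.log (m z.2) :=
    ent_mapDomain_eq_sum _ hW
  have em' : ent m' = -∑ z ∈ W.support, W z * Real.log (m' (F z.2)) :=
    ent_mapDomain_eq_sum _ hW
  have key1 : ∀ z ∈ W.support,
      W z * (Real.log (W' (z.1, F z.2)) + Real.log (m z.2)
        - Real.log (W z) - Real.log (m' (F z.2)))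
      ≤ W' (z.1, F z.2) * m z.2 / m' (F z.2) - W z := by
    intro z hz
    have ha : 0 < W z := lt_of_le_of_ne (hW z) (Ne.symm (Finsupp.mem_support_iff.1 hz))
    have hb : 0 < W' (z.1, F z.2) :=
      lt_of_lt_of_le ha (by simpa using le_mapDomain (fun z : A × B => (z.1, F z.2)) hW z)
    have hc : 0 < m z.2 :=
      lt_of_lt_of_le ha (by simpa using le_mapDomain (fun z : A × B => z.2) hW z)
    have hd : 0 < m' (F z.2) := by
      refine lt_of_lt_of_le hc ?_
      rw [hcomp]
      exact le_mapDomain F (hW.mapDomain _) z.2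
    have hlog : Real.log (W' (z.1, F z.2)) + Real.log (m z.2)
        - Real.log (W z) - Real.log (m' (F z.2))
        = Real.log ((W' (z.1, F z.2) * m z.2) / (W z * m' (F z.2))) := by
      rw [Real.log_div (by positivity) (by positivity),
        Real.log_mul (ne_of_gt hb) (ne_of_gt hc), Real.log_mul (ne_of_gt ha) (ne_of_gt hd)]
      ring
    have h2 : Real.log ((W' (z.1, F z.2) * m z.2) / (W z * m' (F z.2)))
        ≤ (W' (z.1, F z.2) * m z.2) / (W z * m' (F z.2)) - 1 :=
      Real.log_le_sub_one_of_pos (by positivity)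
    have h3 := mul_le_mul_of_nonneg_left h2 (le_of_lt ha)
    rw [hlog]
    refine le_trans h3 (le_of_eq ?_)
    field_simp
  have count : ∑ z ∈ W.support, W' (z.1, F z.2) * m z.2 / m' (F z.2)
      ≤ ∑ z ∈ W.support, W z := by
    set SA := W.support.image Prod.fst with hSA
    set SB := W.support.image Prod.snd with hSB
    have hsub : W.support ⊆ SA ×ˢ SB := by
      intro z hz
      exact Finset.mem_product.2 ⟨Finset.mem_image_of_mem _ hz, Finset.mem_image_of_mem _ hz⟩
    have hnn : ∀ z : A × B, 0 ≤ W' (z.1, F z.2) * m z.2 / m' (F z.2) := by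
      intro z
      have := hW.mapDomain (fun z : A × B => (z.1, F z.2)) (z.1, F z.2)
      have := hW.mapDomain (fun z : A × B => z.2) z.2
      have := hW.mapDomain (fun z : A × B => F z.2) (F z.2)
      positivity
    calc ∑ z ∈ W.support, W' (z.1, F z.2) * m z.2 / m' (F z.2)
        ≤ ∑ z ∈ SA ×ˢ SB, W' (z.1, F z.2) * m z.2 / m' (F z.2) :=
          Finset.sum_le_sum_of_subset_of_nonneg hsub (fun z _ _ => hnn z)
      _ = ∑ a ∈ SA, ∑ b ∈ SB, W' (a, F b) * m b / m' (F b) :=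
          Finset.sum_product _ _ _
      _ = ∑ b ∈ SB, ∑ a ∈ SA, W' (a, F b) * m b / m' (F b) := Finset.sum_comm
      _ ≤ ∑ b ∈ SB, m b := by
          refine Finset.sum_le_sum fun b hb => ?_
          obtain ⟨z, hz, hz2⟩ := Finset.mem_image.1 hb
          have hmb : 0 < m b := by
            have h0 : 0 < W z := lt_of_le_of_ne (hW z) (Ne.symm (Finsupp.mem_support_iff.1 hz))
            have := le_mapDomain (fun z : A × B => z.2) hW z
            rw [hz2] at this
            exact lt_of_lt_of_le h0 this
          have hm'b : 0 < m' (F b) := by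
            refine lt_of_lt_of_le hmb ?_
            rw [hcomp]
            exact le_mapDomain F (hW.mapDomain _) b
          have hrow : ∑ a ∈ SA, W' (a, F b) ≤ m' (F b) := by
            rw [hcomp2]
            exact sum_row_le W' (hW.mapDomain _) SA (F b)
          calc ∑ a ∈ SA, W' (a, F b) * m b / m' (F b)
              = (∑ a ∈ SA, W' (a, F b)) * (m b / m' (F b)) := by
                rw [Finset.sum_mul]
                exact Finset.sum_congr rfl fun a _ => by ring
            _ ≤ m' (F b) * (m b / m' (F b)) := by
                refine mul_le_mul_of_nonneg_right hrow (by positivity)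
            _ = m b := by field_simp
      _ ≤ ∑ b ∈ m.support, m b := by
          refine Finset.sum_le_sum_of_subset_of_nonneg ?_ (fun b _ _ => hW.mapDomain _ b)
          intro b hb
          obtain ⟨z, hz, hz2⟩ := Finset.mem_image.1 hb
          have h0 : 0 < W z := lt_of_le_of_ne (hW z) (Ne.symm (Finsupp.mem_support_iff.1 hz))
          have := le_mapDomain (fun z : A × B => z.2) hW z
          rw [hz2] at this
          exact Finsupp.mem_support_iff.2 (ne_of_gt (lt_of_lt_of_le h0 this))
      _ = ∑ z ∈ W.support, W z := total_mapDomain _ _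
  have hsum : ∑ z ∈ W.support, W z * (Real.log (W' (z.1, F z.2)) + Real.log (m z.2)
        - Real.log (W z) - Real.log (m' (F z.2)))
      = (∑ z ∈ W.support, W z * Real.log (W' (z.1, F z.2)))
        + (∑ z ∈ W.support, W z * Real.log (m z.2))
        - (∑ z ∈ W.support, W z * Real.log (W z))
        - (∑ z ∈ W.support, W z * Real.log (m' (F z.2))) := by
    simp only [mul_add, mul_sub, Finset.sum_add_distrib, Finset.sum_sub_distrib]
  have hle : ∑ z ∈ W.support, W z * (Real.log (W' (z.1, F z.2)) + Real.log (m z.2)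
        - Real.log (W z) - Real.log (m' (F z.2))) ≤ 0 := by
    calc _ ≤ ∑ z ∈ W.support, (W' (z.1, F z.2) * m z.2 / m' (F z.2) - W z) :=
          Finset.sum_le_sum key1
      _ = (∑ z ∈ W.support, W' (z.1, F z.2) * m z.2 / m' (F z.2)) - ∑ z ∈ W.support, W z :=
          Finset.sum_sub_distrib _ _
      _ ≤ 0 := by linarith [count]
  rw [eW, eW', em, em']
  linarith [hsum ▸ hle]

/- ### product distributions -/

lemma prodPMF_apply (p : α →₀ ℝ) (q : β →₀ ℝ) (z : α × β) :
    prodPMF p q z = p z.1 * q z.2 := rfl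

lemma support_prodPMF (p : α →₀ ℝ) (q : β →₀ ℝ) :
    (prodPMF p q).support = p.support ×ˢ q.support := by
  ext z
  simp [prodPMF, Finsupp.mem_support_iff, Finset.mem_product, mul_ne_zero_iff]

lemma pmf_prodPMF {p : α →₀ ℝ} {q : β →₀ ℝ} (hp : IsPMF p) (hq : IsPMF q) :
    IsPMF (prodPMF p q) := by
  constructor
  · intro z; exact mul_nonneg (hp.1 z.1) (hq.1 z.2)
  · rw [support_prodPMF, Finset.sum_product]
    calc ∑ a ∈ p.support, ∑ b ∈ q.support, prodPMF p q (a, b)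
        = ∑ a ∈ p.support, p a * ∑ b ∈ q.support, q b := by
          refine Finset.sum_congr rfl fun a _ => ?_
          rw [Finset.mul_sum]
          exact Finset.sum_congr rfl fun b _ => rfl
      _ = 1 := by
          rw [← Finset.sum_mul, hq.2, mul_one, hp.2]

lemma ent_prodPMF {p : α →₀ ℝ} {q : β →₀ ℝ} (hp : IsPMF p) (hq : IsPMF q) :
    ent (prodPMF p q) = ent p + ent q := by
  rw [ent, support_prodPMF, Finset.sum_product]
  calc ∑ a ∈ p.support, ∑ b ∈ q.support, Real.negMulLog (prodPMF p q (a, b))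
      = ∑ a ∈ p.support, ∑ b ∈ q.support,
          (q b * Real.negMulLog (p a) + p a * Real.negMulLog (q b)) := by
        refine Finset.sum_congr rfl fun a _ => Finset.sum_congr rfl fun b _ => ?_
        rw [prodPMF_apply, Real.negMulLog_mul]
    _ = ∑ a ∈ p.support, ((∑ b ∈ q.support, q b) * Real.negMulLog (p a)
          + p a * ∑ b ∈ q.support, Real.negMulLog (q b)) := by
        refine Finset.sum_congr rfl fun a _ => ?_
        rw [Finset.sum_add_distrib, ← Finset.sum_mul, ← Finset.mul_sum]
    _ = ent p + ent q := by
        rw [Finset.sum_add_distrib, ← Finset.sum_mul, ← Finset.mul_sum, hq.2, hp.2]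
        rw [ent, ent]
        ring

lemma marg_fst (p : α →₀ ℝ) {q : β →₀ ℝ} (hq : IsPMF q) :
    Finsupp.mapDomain (fun z : α × β => z.1) (prodPMF p q) = p := by
  classical
  ext a
  rw [mapDomain_apply_eq, support_prodPMF, Finset.sum_filter, Finset.sum_product]
  have h1 : ∀ x ∈ p.support, (∑ y ∈ q.support, if x = a then prodPMF p q (x, y) else 0)
      = if x = a then p x else 0 := by
    intro x _
    by_cases h : x = a
    · simp only [h, if_true]
      calc ∑ y ∈ q.support, prodPMF p q (a, y) = p a * ∑ y ∈ q.support, q y := by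
            rw [Finset.mul_sum]; exact Finset.sum_congr rfl fun y _ => rfl
        _ = p a := by rw [hq.2, mul_one]
    · simp [h]
  rw [Finset.sum_congr rfl h1, Finset.sum_ite_eq' p.support a (fun x => p x)]
  by_cases h : a ∈ p.support
  · simp [h]
  · simp [h, Finsupp.notMem_support_iff.1 h]

lemma marg_snd {p : α →₀ ℝ} (hp : IsPMF p) (q : β →₀ ℝ) :
    Finsupp.mapDomain (fun z : α × β => z.2) (prodPMF p q) = q := by
  classical
  ext b
  rw [mapDomain_apply_eq, support_prodPMF, Finset.sum_filter, Finset.sum_product]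
  have h1 : ∀ x ∈ p.support, (∑ y ∈ q.support, if y = b then prodPMF p q (x, y) else 0)
      = p x * q b := by
    intro x _
    rw [Finset.sum_ite_eq' q.support b (fun y => prodPMF p q (x, y))]
    by_cases h : b ∈ q.support
    · simp [h, prodPMF_apply]
    · simp [h, Finsupp.notMem_support_iff.1 h, prodPMF_apply]
  rw [Finset.sum_congr rfl h1, ← Finset.sum_mul, hp.2, one_mul]

lemma mapDomain_prodMk (f : α → γ) (g : β → δ) (p : α →₀ ℝ) (q : β →₀ ℝ) :
    Finsupp.mapDomain (fun z : α × β => (f z.1, g z.2)) (prodPMF p q)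
      = prodPMF (Finsupp.mapDomain f p) (Finsupp.mapDomain g q) := by
  classical
  ext z
  obtain ⟨c, d⟩ := z
  rw [mapDomain_apply_eq, support_prodPMF, Finset.sum_filter, Finset.sum_product,
    prodPMF_apply, mapDomain_apply_eq, mapDomain_apply_eq,
    Finset.sum_filter, Finset.sum_filter, Finset.sum_mul_sum]
  refine Finset.sum_congr rfl fun x _ => Finset.sum_congr rfl fun y _ => ?_
  by_cases h1 : f x = c <;> by_cases h2 : g y = d <;>
    simp [h1, h2, prodPMF_apply, Prod.ext_iff]

/- ### entropy of pushforwards of a single ambient distribution -/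

/-- `EF w f` is the entropy of the law of the "random variable" `f` when the
ambient probability space has distribution `w`. -/
def EF {Ω γ : Type*} (w : Ω →₀ ℝ) (f : Ω → γ) : ℝ := ent (Finsupp.mapDomain f w)

variable {Ω : Type*} {w : Ω →₀ ℝ}

lemma EF_comp_le (hw : NN w) (f : Ω → α) (h : α → β) :
    EF w (fun ω => h (f ω)) ≤ EF w f := by
  have e : Finsupp.mapDomain (fun ω => h (f ω)) w
      = Finsupp.mapDomain h (Finsupp.mapDomain f w) := by
    rw [← Finsupp.mapDomain_comp]; rfl
  rw [EF, EF, e]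
  exact ent_mapDomain_le h (hw.mapDomain f)

lemma EF_eq (hw : NN w) {f : Ω → α} {g : Ω → β} (φ : α → β) (ψ : β → α)
    (h1 : ∀ ω, φ (f ω) = g ω) (h2 : ∀ ω, ψ (g ω) = f ω) :
    EF w f = EF w g := by
  refine le_antisymm ?_ ?_
  · calc EF w f = EF w (fun ω => ψ (g ω)) := by rw [funext h2]
      _ ≤ EF w g := EF_comp_le hw g ψ
  · calc EF w g = EF w (fun ω => φ (f ω)) := by rw [funext h1]
      _ ≤ EF w f := EF_comp_le hw f φ

lemma EF_submod (hw : NN w) (a : Ω → α) (b : Ω → β) (F : β → γ)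
    (ab : Ω → α × β) (aFb : Ω → α × γ) (Fb : Ω → γ)
    (hab : ∀ ω, ab ω = (a ω, b ω)) (haFb : ∀ ω, aFb ω = (a ω, F (b ω)))
    (hFb : ∀ ω, Fb ω = F (b ω)) :
    EF w ab + EF w Fb ≤ EF w aFb + EF w b := by
  rw [funext hab, funext haFb, funext hFb]
  have e1 : Finsupp.mapDomain (fun ω => (a ω, F (b ω))) w
      = Finsupp.mapDomain (fun z : α × β => (z.1, F z.2))
          (Finsupp.mapDomain (fun ω => (a ω, b ω)) w) := by
    rw [← Finsupp.mapDomain_comp]; rfl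
  have e2 : Finsupp.mapDomain b w
      = Finsupp.mapDomain (fun z : α × β => z.2)
          (Finsupp.mapDomain (fun ω => (a ω, b ω)) w) := by
    rw [← Finsupp.mapDomain_comp]; rfl
  have e3 : Finsupp.mapDomain (fun ω => F (b ω)) w
      = Finsupp.mapDomain (fun z : α × β => F z.2)
          (Finsupp.mapDomain (fun ω => (a ω, b ω)) w) := by
    rw [← Finsupp.mapDomain_comp]; rfl
  rw [EF, EF, EF, EF, e1, e2, e3]
  exact submod _ (hw.mapDomain _) F

lemma ent_punit {v : Unit →₀ ℝ} (hv : IsPMF v) : ent v = 0 := by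
  have hsub : v.support ⊆ {Unit.unit} :=
    fun x _ => Finset.mem_singleton.2 (Subsingleton.elim x Unit.unit)
  rcases Finset.subset_singleton_iff.1 hsub with h0 | h1
  · exfalso
    have := hv.2
    rw [h0] at this
    simp at this
  · have hv1 : v Unit.unit = 1 := by
      have := hv.2
      rwa [h1, Finset.sum_singleton] at this
    rw [ent, h1, Finset.sum_singleton, hv1, Real.negMulLog_one]

lemma EF_pair_le (hw : IsPMF w) (a : Ω → α) (b : Ω → β) :
    EF w (fun ω => (a ω, b ω)) ≤ EF w a + EF w b := by
  have h := EF_submod hw.1 a b (fun _ => Unit.unit)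
    (fun ω => (a ω, b ω)) (fun ω => (a ω, Unit.unit)) (fun _ => Unit.unit)
    (fun ω => rfl) (fun ω => rfl) (fun ω => rfl)
  have h2 : EF w (fun _ : Ω => Unit.unit) = 0 := ent_punit (pmf_mapDomain hw _)
  have h3 : EF w (fun ω => (a ω, Unit.unit)) = EF w a :=
    EF_eq hw.1 (fun z : α × Unit => z.1) (fun s : α => (s, Unit.unit))
      (fun ω => rfl) (fun ω => rfl)
  linarith

/- ### the main entropic argument -/

lemma main {Ω G H' : Type*} [AddCommGroup G] (w : Ω →₀ ℝ) (hw : IsPMF w)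
    (x y₁ y₂ : Ω → G) (π : G → H')
    (hπ : ∀ a b : G, π (a - (b + b)) = π a)
    (hdb : Function.Injective (fun g : G => g + g))
    (hjoint : EF w (fun ω => (x ω, (y₁ ω, y₂ ω))) = EF w x + EF w y₁ + EF w y₂)
    (hc1 : EF w y₁ = EF w y₂)
    (hc2 : EF w (fun ω => x ω - y₁ ω) = EF w (fun ω => x ω - y₂ ω)) :
    EF w (fun ω => π (x ω)) ≤
      10 * (EF w (fun ω => x ω - y₁ ω) - EF w x / 2 - EF w y₁ / 2) := by
  have nn : NN w := hw.1
  -- pairwise independence (sandwich arguments)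
  have reassoc1 : EF w (fun ω => (x ω, (y₁ ω, y₂ ω)))
      = EF w (fun ω => ((x ω, y₁ ω), y₂ ω)) :=
    EF_eq nn (fun z : G × (G × G) => ((z.1, z.2.1), z.2.2))
      (fun z : (G × G) × G => (z.1.1, (z.1.2, z.2))) (fun ω => rfl) (fun ω => rfl)
  have P1 : EF w (fun ω => (x ω, y₁ ω)) = EF w x + EF w y₁ := by
    refine le_antisymm (EF_pair_le hw _ _) ?_
    have h1 : EF w (fun ω => ((x ω, y₁ ω), y₂ ω))
        ≤ EF w (fun ω => (x ω, y₁ ω)) + EF w y₂ := EF_pair_le hw _ _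
    linarith [reassoc1, hjoint]
  have reassoc2 : EF w (fun ω => (x ω, (y₁ ω, y₂ ω)))
      = EF w (fun ω => ((x ω, y₂ ω), y₁ ω)) :=
    EF_eq nn (fun z : G × (G × G) => ((z.1, z.2.2), z.2.1))
      (fun z : (G × G) × G => (z.1.1, (z.2, z.1.2))) (fun ω => rfl) (fun ω => rfl)
  have P2 : EF w (fun ω => (x ω, y₂ ω)) = EF w x + EF w y₂ := by
    refine le_antisymm (EF_pair_le hw _ _) ?_
    have h1 : EF w (fun ω => ((x ω, y₂ ω), y₁ ω))
        ≤ EF w (fun ω => (x ω, y₂ ω)) + EF w y₁ := EF_pair_le hw _ _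
    linarith [reassoc2, hjoint]
  have reassoc3 : EF w (fun ω => (x ω, (y₁ ω, y₂ ω)))
      = EF w (fun ω => ((y₁ ω, y₂ ω), x ω)) :=
    EF_eq nn (fun z : G × (G × G) => ((z.2.1, z.2.2), z.1))
      (fun z : (G × G) × G => (z.2, (z.1.1, z.1.2))) (fun ω => rfl) (fun ω => rfl)
  have P3 : EF w (fun ω => (y₁ ω, y₂ ω)) = EF w y₁ + EF w y₂ := by
    refine le_antisymm (EF_pair_le hw _ _) ?_
    have h1 : EF w (fun ω => ((y₁ ω, y₂ ω), x ω))
        ≤ EF w (fun ω => (y₁ ω, y₂ ω)) + EF w x := EF_pair_le hw _ _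
    linarith [reassoc3, hjoint]
  have Pswap : EF w (fun ω => (y₁ ω, x ω)) = EF w (fun ω => (x ω, y₁ ω)) :=
    EF_eq nn (fun z : G × G => (z.2, z.1)) (fun z : G × G => (z.2, z.1))
      (fun ω => rfl) (fun ω => rfl)
  -- Step (★): H[π∘x] ≤ H[x - 2y₁] - H[y₁]
  have star : EF w (fun ω => π (x ω))
      ≤ EF w (fun ω => x ω - (y₁ ω + y₁ ω)) - EF w y₁ := by
    have hu : EF w (fun ω => x ω - (y₁ ω + y₁ ω))
        = EF w (fun ω => (x ω - (y₁ ω + y₁ ω), π (x ω))) :=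
      EF_eq nn (fun s : G => (s, π s)) (fun z : G × _ => z.1)
        (fun ω => by
          show (x ω - (y₁ ω + y₁ ω), π (x ω - (y₁ ω + y₁ ω)))
            = (x ω - (y₁ ω + y₁ ω), π (x ω))
          rw [hπ (x ω) (y₁ ω)]) (fun ω => rfl)
    have hsub := EF_submod nn (fun ω => x ω - (y₁ ω + y₁ ω)) x π
      (fun ω => (x ω - (y₁ ω + y₁ ω), x ω))
      (fun ω => (x ω - (y₁ ω + y₁ ω), π (x ω)))
      (fun ω => π (x ω)) (fun ω => rfl) (fun ω => rfl) (fun ω => rfl)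
    have hux : EF w (fun ω => (x ω - (y₁ ω + y₁ ω), x ω))
        = EF w (fun ω => (y₁ ω + y₁ ω, x ω)) :=
      EF_eq nn (fun z : G × G => (z.2 - z.1, z.2)) (fun z : G × G => (z.2 - z.1, z.2))
        (fun ω => by first
            | rfl
            | (dsimp only; simp only [Prod.mk.injEq]; and_intros <;> first | rfl | trivial | abel))
        (fun ω => by first
            | rfl
            | (dsimp only; simp only [Prod.mk.injEq]; and_intros <;> first | rfl | trivial | abel))
    have hdbl : EF w (fun ω => (y₁ ω + y₁ ω, x ω)) = EF w (fun ω => (y₁ ω, x ω)) :=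
      EF_eq nn (fun z : G × G => (Function.invFun (fun g : G => g + g) z.1, z.2))
        (fun z : G × G => (z.1 + z.1, z.2))
        (fun ω => by
          dsimp only
          simp only [Prod.mk.injEq]
          and_intros <;>
            first
              | rfl
              | trivial
              | exact Function.leftInverse_invFun hdb (y₁ ω))
        (fun ω => rfl)
    have hy1x : EF w (fun ω => (y₁ ω, x ω)) = EF w y₁ + EF w x := by
      rw [Pswap, P1]; ring
    linarith [hu, hsub, hux, hdbl, hy1x]
  -- Step (A2): H[x - 2y₁] ≤ H[x - y₁ - y₂] + H[y₂ - y₁] - H[y₂]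
  have A2 : EF w (fun ω => x ω - (y₁ ω + y₁ ω))
      ≤ EF w (fun ω => x ω - y₁ ω - y₂ ω) + EF w (fun ω => y₂ ω - y₁ ω) - EF w y₂ := by
    have hsub := EF_submod nn (fun ω => y₂ ω - y₁ ω) (fun ω => (x ω, y₁ ω))
      (fun z : G × G => z.1 - (z.2 + z.2))
      (fun ω => (y₂ ω - y₁ ω, (x ω, y₁ ω)))
      (fun ω => (y₂ ω - y₁ ω, x ω - (y₁ ω + y₁ ω)))
      (fun ω => x ω - (y₁ ω + y₁ ω))
      (fun ω => rfl) (fun ω => rfl) (fun ω => rfl)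
    have hA : EF w (fun ω => (y₂ ω - y₁ ω, (x ω, y₁ ω))) = EF w x + EF w y₁ + EF w y₂  := by
      rw [← hjoint]
      exact EF_eq nn (fun z : G × (G × G) => (z.2.1, (z.2.2, z.1 + z.2.2)))
        (fun z : G × (G × G) => (z.2.2 - z.2.1, (z.1, z.2.1)))
        (fun ω => by first
            | rfl
            | (dsimp only; simp only [Prod.mk.injEq]; and_intros <;> first | rfl | trivial | abel))
        (fun ω => rfl)
    have hvu : EF w (fun ω => (y₂ ω - y₁ ω, x ω - (y₁ ω + y₁ ω)))
        = EF w (fun ω => (y₂ ω - y₁ ω, x ω - y₁ ω - y₂ ω)) :=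
      EF_eq nn (fun z : G × G => (z.1, z.2 - z.1)) (fun z : G × G => (z.1, z.2 + z.1))
        (fun ω => by first
            | rfl
            | (dsimp only; simp only [Prod.mk.injEq]; and_intros <;> first | rfl | trivial | abel))
        (fun ω => by first
            | rfl
            | (dsimp only; simp only [Prod.mk.injEq]; and_intros <;> first | rfl | trivial | abel))
    have hps := EF_pair_le hw (fun ω => y₂ ω - y₁ ω) (fun ω => x ω - y₁ ω - y₂ ω)
    linarith [hsub, hA, hvu, hps, P1]
  -- Step (KV): H[x - y₁ - y₂] ≤ H[x - y₁] + H[x - y₂] - H[x]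
  have KV : EF w (fun ω => x ω - y₁ ω - y₂ ω)
      ≤ EF w (fun ω => x ω - y₁ ω) + EF w (fun ω => x ω - y₂ ω) - EF w x := by
    have E3 : EF w (fun ω => (x ω - y₁ ω, y₂ ω))
        = EF w (fun ω => x ω - y₁ ω) + EF w y₂ := by
      refine le_antisymm (EF_pair_le hw _ _) ?_
      have hs := EF_submod nn y₂ (fun ω => (x ω, y₁ ω)) (fun z : G × G => z.1 - z.2)
        (fun ω => (y₂ ω, (x ω, y₁ ω))) (fun ω => (y₂ ω, x ω - y₁ ω))
        (fun ω => x ω - y₁ ω)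
        (fun ω => rfl) (fun ω => rfl) (fun ω => rfl)
      have h1 : EF w (fun ω => (y₂ ω, (x ω, y₁ ω))) = EF w x + EF w y₁ + EF w y₂  := by
        rw [← hjoint]
        exact EF_eq nn (fun z : G × (G × G) => (z.2.1, (z.2.2, z.1)))
          (fun z : G × (G × G) => (z.2.2, (z.1, z.2.1))) (fun ω => rfl) (fun ω => rfl)
      have h2 : EF w (fun ω => (y₂ ω, x ω - y₁ ω))
          = EF w (fun ω => (x ω - y₁ ω, y₂ ω)) :=
        EF_eq nn (fun z : G × G => (z.2, z.1)) (fun z : G × G => (z.2, z.1))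
          (fun ω => rfl) (fun ω => rfl)
      linarith [hs, h1, h2, P1]
    have E5 : EF w (fun ω => (y₁ ω, x ω - y₂ ω))
        = EF w y₁ + EF w (fun ω => x ω - y₂ ω) := by
      refine le_antisymm ?_ ?_
      · have := EF_pair_le hw y₁ (fun ω => x ω - y₂ ω)
        linarith
      · have hs := EF_submod nn y₁ (fun ω => (x ω, y₂ ω)) (fun z : G × G => z.1 - z.2)
          (fun ω => (y₁ ω, (x ω, y₂ ω))) (fun ω => (y₁ ω, x ω - y₂ ω))
          (fun ω => x ω - y₂ ω)
          (fun ω => rfl) (fun ω => rfl) (fun ω => rfl)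
        have h1 : EF w (fun ω => (y₁ ω, (x ω, y₂ ω))) = EF w x + EF w y₁ + EF w y₂ := by
          rw [← hjoint]
          exact EF_eq nn (fun z : G × (G × G) => (z.2.1, (z.1, z.2.2)))
            (fun z : G × (G × G) => (z.2.1, (z.1, z.2.2))) (fun ω => rfl) (fun ω => rfl)
        linarith [hs, h1, P2]
    have hs3 := EF_submod nn (fun ω => x ω - y₂ ω)
      (fun ω => (x ω - y₁ ω - y₂ ω, y₂ ω)) Prod.fst
      (fun ω => (x ω - y₂ ω, (x ω - y₁ ω - y₂ ω, y₂ ω)))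
      (fun ω => (x ω - y₂ ω, x ω - y₁ ω - y₂ ω))
      (fun ω => x ω - y₁ ω - y₂ ω)
      (fun ω => rfl) (fun ω => rfl) (fun ω => rfl)
    have hE1 : EF w (fun ω => (x ω - y₂ ω, (x ω - y₁ ω - y₂ ω, y₂ ω)))
        = EF w x + EF w y₁ + EF w y₂ := by
      rw [← hjoint]
      exact EF_eq nn (fun z : G × (G × G) => (z.1 + z.2.2, (z.1 - z.2.1, z.2.2)))
        (fun z : G × (G × G) => (z.1 - z.2.2, (z.1 - z.2.1 - z.2.2, z.2.2)))
        (fun ω => by first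
            | rfl
            | (dsimp only; simp only [Prod.mk.injEq]; and_intros <;> first | rfl | trivial | abel))
        (fun ω => rfl)
    have hE2 : EF w (fun ω => (x ω - y₁ ω - y₂ ω, y₂ ω))
        = EF w (fun ω => (x ω - y₁ ω, y₂ ω)) :=
      EF_eq nn (fun z : G × G => (z.1 + z.2, z.2)) (fun z : G × G => (z.1 - z.2, z.2))
        (fun ω => by first
            | rfl
            | (dsimp only; simp only [Prod.mk.injEq]; and_intros <;> first | rfl | trivial | abel))
        (fun ω => by first
            | rfl
            | (dsimp only; simp only [Prod.mk.injEq]; and_intros <;> first | rfl | trivial | abel))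
    have hE4 : EF w (fun ω => (x ω - y₂ ω, x ω - y₁ ω - y₂ ω))
        = EF w (fun ω => (y₁ ω, x ω - y₂ ω)) :=
      EF_eq nn (fun z : G × G => (z.1 - z.2, z.1)) (fun z : G × G => (z.2, z.2 - z.1))
        (fun ω => by first
            | rfl
            | (dsimp only; simp only [Prod.mk.injEq]; and_intros <;> first | rfl | trivial | abel))
        (fun ω => by first
            | rfl
            | (dsimp only; simp only [Prod.mk.injEq]; and_intros <;> first | rfl | trivial | abel))
    linarith [hs3, hE1, hE2, hE4, E3, E5]
  -- Step (T): Ruzsa triangle-type bound for H[y₂ - y₁]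
  have T : EF w (fun ω => y₂ ω - y₁ ω)
      ≤ EF w (fun ω => x ω - y₁ ω) + EF w (fun ω => x ω - y₂ ω) - EF w x := by
    have hs := EF_submod nn (fun ω => y₂ ω - x ω) (fun ω => (y₁ ω, y₂ ω))
      (fun z : G × G => z.2 - z.1)
      (fun ω => (y₂ ω - x ω, (y₁ ω, y₂ ω)))
      (fun ω => (y₂ ω - x ω, y₂ ω - y₁ ω))
      (fun ω => y₂ ω - y₁ ω)
      (fun ω => rfl) (fun ω => rfl) (fun ω => rfl)
    have h1 : EF w (fun ω => (y₂ ω - x ω, (y₁ ω, y₂ ω))) = EF w x + EF w y₁ + EF w y₂  := by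
      rw [← hjoint]
      exact EF_eq nn (fun z : G × (G × G) => (z.2.2 - z.1, (z.2.1, z.2.2)))
        (fun z : G × (G × G) => (z.2.2 - z.1, (z.2.1, z.2.2)))
        (fun ω => by first
            | rfl
            | (dsimp only; simp only [Prod.mk.injEq]; and_intros <;> first | rfl | trivial | abel))
        (fun ω => rfl)
    have h2 : EF w (fun ω => (y₂ ω - x ω, y₂ ω - y₁ ω))
        = EF w (fun ω => (y₂ ω - x ω, x ω - y₁ ω)) :=
      EF_eq nn (fun z : G × G => (z.1, z.2 - z.1)) (fun z : G × G => (z.1, z.2 + z.1))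
        (fun ω => by first
            | rfl
            | (dsimp only; simp only [Prod.mk.injEq]; and_intros <;> first | rfl | trivial | abel))
        (fun ω => by first
            | rfl
            | (dsimp only; simp only [Prod.mk.injEq]; and_intros <;> first | rfl | trivial | abel))
    have h3 := EF_pair_le hw (fun ω => y₂ ω - x ω) (fun ω => x ω - y₁ ω)
    have h4 : EF w (fun ω => y₂ ω - x ω) = EF w (fun ω => x ω - y₂ ω) :=
      EF_eq nn (fun s : G => -s) (fun s : G => -s)
        (fun ω => by show -(y₂ ω - x ω) = x ω - y₂ ω; abel)
        (fun ω => by show -(x ω - y₂ ω) = y₂ ω - x ω; abel)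
    linarith [hs, h1, h2, h3, h4, P3]
  -- nonnegativity of the distance
  have N1 : EF w x ≤ EF w (fun ω => x ω - y₁ ω) := by
    have h1 : EF w (fun ω => (x ω - y₁ ω, y₁ ω)) = EF w (fun ω => (x ω, y₁ ω)) :=
      EF_eq nn (fun z : G × G => (z.1 + z.2, z.2)) (fun z : G × G => (z.1 - z.2, z.2))
        (fun ω => by first
            | rfl
            | (dsimp only; simp only [Prod.mk.injEq]; and_intros <;> first | rfl | trivial | abel))
        (fun ω => by first
            | rfl
            | (dsimp only; simp only [Prod.mk.injEq]; and_intros <;> first | rfl | trivial | abel))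
    have h2 := EF_pair_le hw (fun ω => x ω - y₁ ω) y₁
    linarith [P1]
  have N2 : EF w y₁ ≤ EF w (fun ω => x ω - y₁ ω) := by
    have h1 : EF w (fun ω => (x ω - y₁ ω, x ω)) = EF w (fun ω => (y₁ ω, x ω)) :=
      EF_eq nn (fun z : G × G => (z.2 - z.1, z.2)) (fun z : G × G => (z.2 - z.1, z.2))
        (fun ω => by first
            | rfl
            | (dsimp only; simp only [Prod.mk.injEq]; and_intros <;> first | rfl | trivial | abel))
        (fun ω => by first
            | rfl
            | (dsimp only; simp only [Prod.mk.injEq]; and_intros <;> first | rfl | trivial | abel))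
    have h2 := EF_pair_le hw (fun ω => x ω - y₁ ω) x
    have h3 : EF w (fun ω => (y₁ ω, x ω)) = EF w y₁ + EF w x := by
      rw [Pswap, P1]; ring
    linarith
  linarith [star, A2, KV, T, N1, N2, hc1, hc2]

/- ### instantiation on product spaces -/

lemma key {G H' : Type*} [AddCommGroup G] (π : G → H')
    (hπ : ∀ a b : G, π (a - (b + b)) = π a)
    (hdb : Function.Injective (fun g : G => g + g))
    {p q : G →₀ ℝ} (hp : IsPMF p) (hq : IsPMF q) :
    ent (Finsupp.mapDomain π p) ≤ 10 * dEnt p q := by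
  classical
  have hqq : IsPMF (prodPMF q q) := pmf_prodPMF hq hq
  have hw : IsPMF (prodPMF p (prodPMF q q)) := pmf_prodPMF hp hqq
  set w := prodPMF p (prodPMF q q) with hwdef
  have mx : Finsupp.mapDomain (fun ω : G × (G × G) => ω.1) w = p := marg_fst p hqq
  have msnd : Finsupp.mapDomain (fun ω : G × (G × G) => ω.2) w = prodPMF q q :=
    marg_snd hp (prodPMF q q)
  have my1 : Finsupp.mapDomain (fun ω : G × (G × G) => ω.2.1) w = q := by
    have e : (fun ω : G × (G × G) => ω.2.1)
        = (fun z : G × G => z.1) ∘ (fun ω : G × (G × G) => ω.2) := rfl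
    rw [e, Finsupp.mapDomain_comp, msnd, marg_fst q hq]
  have my2 : Finsupp.mapDomain (fun ω : G × (G × G) => ω.2.2) w = q := by
    have e : (fun ω : G × (G × G) => ω.2.2)
        = (fun z : G × G => z.2) ∘ (fun ω : G × (G × G) => ω.2) := rfl
    rw [e, Finsupp.mapDomain_comp, msnd, marg_snd hq q]
  have mpair1 : Finsupp.mapDomain (fun ω : G × (G × G) => (ω.1, ω.2.1)) w = prodPMF p q := by
    calc Finsupp.mapDomain (fun ω : G × (G × G) => (ω.1, ω.2.1)) w
        = prodPMF (Finsupp.mapDomain (fun a : G => a) p)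
            (Finsupp.mapDomain (fun z : G × G => z.1) (prodPMF q q)) :=
          mapDomain_prodMk (fun a : G => a) (fun z : G × G => z.1) p (prodPMF q q)
      _ = prodPMF p q := by
          rw [marg_fst q hq, show Finsupp.mapDomain (fun a : G => a) p = p from
            Finsupp.mapDomain_id]
  have mpair2 : Finsupp.mapDomain (fun ω : G × (G × G) => (ω.1, ω.2.2)) w = prodPMF p q := by
    calc Finsupp.mapDomain (fun ω : G × (G × G) => (ω.1, ω.2.2)) w
        = prodPMF (Finsupp.mapDomain (fun a : G => a) p)
            (Finsupp.mapDomain (fun z : G × G => z.2) (prodPMF q q)) :=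
          mapDomain_prodMk (fun a : G => a) (fun z : G × G => z.2) p (prodPMF q q)
      _ = prodPMF p q := by
          rw [marg_snd hq q, show Finsupp.mapDomain (fun a : G => a) p = p from
            Finsupp.mapDomain_id]
  have msub1 : Finsupp.mapDomain (fun ω : G × (G × G) => ω.1 - ω.2.1) w = subDist p q := by
    have e : (fun ω : G × (G × G) => ω.1 - ω.2.1)
        = (fun z : G × G => z.1 - z.2) ∘ (fun ω : G × (G × G) => (ω.1, ω.2.1)) := rfl
    rw [e, Finsupp.mapDomain_comp, mpair1]
    rfl
  have msub2 : Finsupp.mapDomain (fun ω : G × (G × G) => ω.1 - ω.2.2) w = subDist p q := by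
    have e : (fun ω : G × (G × G) => ω.1 - ω.2.2)
        = (fun z : G × G => z.1 - z.2) ∘ (fun ω : G × (G × G) => (ω.1, ω.2.2)) := rfl
    rw [e, Finsupp.mapDomain_comp, mpair2]
    rfl
  have mjoint : Finsupp.mapDomain (fun ω : G × (G × G) => (ω.1, (ω.2.1, ω.2.2))) w = w :=
    Finsupp.mapDomain_id
  have hjoint : EF w (fun ω : G × (G × G) => (ω.1, (ω.2.1, ω.2.2)))
      = EF w (fun ω : G × (G × G) => ω.1) + EF w (fun ω : G × (G × G) => ω.2.1)
        + EF w (fun ω : G × (G × G) => ω.2.2) := by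
    rw [EF, EF, EF, EF, mjoint, mx, my1, my2, hwdef, ent_prodPMF hp hqq, ent_prodPMF hq hq]
    ring
  have hc1 : EF w (fun ω : G × (G × G) => ω.2.1) = EF w (fun ω : G × (G × G) => ω.2.2) := by
    rw [EF, EF, my1, my2]
  have hc2 : EF w (fun ω : G × (G × G) => ω.1 - ω.2.1)
      = EF w (fun ω : G × (G × G) => ω.1 - ω.2.2) := by
    rw [EF, EF, msub1, msub2]
  have hmain := main w hw (fun ω => ω.1) (fun ω => ω.2.1) (fun ω => ω.2.2) π hπ hdb
    hjoint hc1 hc2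
  have hπx : EF w (fun ω : G × (G × G) => π ω.1) = ent (Finsupp.mapDomain π p) := by
    rw [EF, show (fun ω : G × (G × G) => π ω.1)
      = π ∘ (fun ω : G × (G × G) => ω.1) from rfl, Finsupp.mapDomain_comp, mx]
  have hsubE : EF w (fun ω : G × (G × G) => ω.1 - ω.2.1) = ent (subDist p q) := by
    rw [EF, msub1]
  have ex : EF w (fun ω : G × (G × G) => ω.1) = ent p := by rw [EF, mx]
  have ey : EF w (fun ω : G × (G × G) => ω.2.1) = ent q := by rw [EF, my1]
  rw [hπx, hsubE, ex, ey] at hmain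
  rw [dEnt]
  linarith

lemma nn_subDist {G : Type*} [AddCommGroup G] {p q : G →₀ ℝ} (hp : IsPMF p) (hq : IsPMF q) :
    NN (subDist p q) :=
  NN.mapDomain _ (pmf_prodPMF hp hq).1

lemma ent_mapDomain_neg {G : Type*} [AddCommGroup G] (V : G →₀ ℝ) (hV : NN V) :
    ent (Finsupp.mapDomain (fun g : G => -g) V) = ent V := by
  refine le_antisymm (ent_mapDomain_le _ hV) ?_
  have e : V = Finsupp.mapDomain (fun g : G => -g)
      (Finsupp.mapDomain (fun g : G => -g) V) := by
    rw [← Finsupp.mapDomain_comp]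
    have h : ((fun g : G => -g) ∘ (fun g : G => -g)) = id := by
      funext g; simp
    rw [h, Finsupp.mapDomain_id]
  nth_rw 1 [e]
  exact ent_mapDomain_le _ (hV.mapDomain _)

lemma dEnt_comm {G : Type*} [AddCommGroup G] {p q : G →₀ ℝ} (hp : IsPMF p) (hq : IsPMF q) :
    dEnt q p = dEnt p q := by
  have hinj : Function.Injective (fun z : G × G => (z.2, z.1)) := by
    intro a b h
    cases a; cases b
    simpa [Prod.ext_iff, and_comm] using h
  have hswap : prodPMF q p = Finsupp.mapDomain (fun z : G × G => (z.2, z.1)) (prodPMF p q) := by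
    ext z
    have h := Finsupp.mapDomain_apply hinj (prodPMF p q) (z.2, z.1)
    calc prodPMF q p z = prodPMF p q (z.2, z.1) := mul_comm _ _
      _ = Finsupp.mapDomain (fun z : G × G => (z.2, z.1)) (prodPMF p q) z := h.symm
  have hfun : (fun z : G × G => z.2 - z.1)
      = ((fun g : G => -g) ∘ (fun z : G × G => z.1 - z.2)) := by
    funext z
    show z.2 - z.1 = -(z.1 - z.2)
    abel
  have e1 : subDist q p = Finsupp.mapDomain (fun g : G => -g) (subDist p q) := by
    calc subDist q p
        = Finsupp.mapDomain (fun z : G × G => z.1 - z.2)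
            (Finsupp.mapDomain (fun z : G × G => (z.2, z.1)) (prodPMF p q)) := by
          rw [subDist, hswap]
      _ = Finsupp.mapDomain ((fun z : G × G => z.1 - z.2) ∘ (fun z : G × G => (z.2, z.1)))
            (prodPMF p q) := (Finsupp.mapDomain_comp).symm
      _ = Finsupp.mapDomain (fun z : G × G => z.2 - z.1) (prodPMF p q) := rfl
      _ = Finsupp.mapDomain ((fun g : G => -g) ∘ (fun z : G × G => z.1 - z.2))
            (prodPMF p q) := by rw [hfun]
      _ = Finsupp.mapDomain (fun g : G => -g) (subDist p q) := by
          rw [Finsupp.mapDomain_comp]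
          rfl
  rw [dEnt, dEnt, e1, ent_mapDomain_neg _ (nn_subDist hp hq)]
  ring

end S17


/-- Let `X ~ p`, `Y ~ q` be random variables taking values in finite
subsets of `ℤ^D`, and let `φ : ℤ^D → F₂^D` be coordinatewise reduction mod `2`. Then
`H(φ(X)) ≤ 10 d_ent(X, Y)` and `H(φ(Y)) ≤ 10 d_ent(X, Y)`. -/
theorem statement17 (D : ℕ) (p q : (Fin D → ℤ) →₀ ℝ) (hp : IsPMF p) (hq : IsPMF q) :
    ent (Finsupp.mapDomain (fun v : Fin D → ℤ => fun i => ((v i : ℤ) : ZMod 2)) p) ≤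
        10 * dEnt p q ∧
    ent (Finsupp.mapDomain (fun v : Fin D → ℤ => fun i => ((v i : ℤ) : ZMod 2)) q) ≤
        10 * dEnt p q := by
  have hπ : ∀ a b : Fin D → ℤ,
      (fun v : Fin D → ℤ => fun i => ((v i : ℤ) : ZMod 2)) (a - (b + b))
        = (fun v : Fin D → ℤ => fun i => ((v i : ℤ) : ZMod 2)) a := by
    intro a b
    funext i
    show (((a - (b + b)) i : ℤ) : ZMod 2) = ((a i : ℤ) : ZMod 2)
    have : (a - (b + b)) i = a i - (b i + b i) := rfl
    rw [this]
    push_cast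
    rw [CharTwo.add_self_eq_zero, sub_zero]
  have hdb : Function.Injective (fun g : Fin D → ℤ => g + g) := by
    intro a b h
    funext i
    have h2 : a i + a i = b i + b i := congrFun h i
    omega
  refine ⟨S17.key (fun v : Fin D → ℤ => fun i => ((v i : ℤ) : ZMod 2)) hπ hdb hp hq, ?_⟩
  have h2 := S17.key (fun v : Fin D → ℤ => fun i => ((v i : ℤ) : ZMod 2)) hπ hdb hq hp
  have hcomm := S17.dEnt_comm hp hq
  linarith


end
end
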